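/- Let $d \ge 1$. If $(\tau, s)$ is a John–Strömberg pair for $\mathcal{Q}(\mathbb{R}^{d+1})$, then $(\tau, s)$ is also a John–Strömberg pair for $\mathcal{Q}(\mathbb{R}^d)$. In other words, $JS(d+1) \subseteq JS(d)$. -/

import Mathlib

open MeasureTheory Set

/-- A closed axis-parallel cube in `ℝ^d` with positive side length. -/
def IsCube {d : ℕ} (Q : Set (Fin d → ℝ)) : Prop :=
  ∃ (a : Fin d → ℝ) (l : ℝ), 0 < l ∧ Q = Set.univ.pi fun j => Set.Icc (a j) (a j + l)

/-- `(τ, s)` is a John–Strömberg pair for the collection of all cubes in `ℝ^d`. -/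
def IsJSPair (d : ℕ) (τ s : ℝ) : Prop :=
  0 < τ ∧ 0 < s ∧
    ∀ Q : Set (Fin d → ℝ), IsCube Q →
      ∀ Ep Em : Set (Fin d → ℝ), MeasurableSet Ep → MeasurableSet Em →
        Ep ⊆ Q → Em ⊆ Q → Disjoint Ep Em →
        min (volume Ep) (volume Em) > ENNReal.ofReal τ * volume ((Q \ Ep) \ Em) →
        ∃ W : Set (Fin d → ℝ), IsCube W ∧ W ⊆ Q ∧
          min (volume (Ep ∩ W)) (volume (Em ∩ W)) ≥ ENNReal.ofReal s * volume W

namespace JSAux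

variable {d : ℕ}

noncomputable def e (d : ℕ) : (Fin (d+1) → ℝ) ≃ᵐ ℝ × (Fin d → ℝ) :=
  MeasurableEquiv.piFinSuccAbove (fun _ : Fin (d+1) => ℝ) 0

lemma e_apply (x : Fin (d+1) → ℝ) : e d x = (x 0, Fin.tail x) := by
  simp [e, MeasurableEquiv.piFinSuccAbove_apply]

lemma preimage_prod (A : Set ℝ) (B : Fin d → Set ℝ) :
    e d ⁻¹' (A ×ˢ Set.univ.pi B) = Set.univ.pi (Fin.cons A B) := by
  ext x
  simp only [mem_preimage, e_apply, mem_prod, mem_univ_pi]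
  constructor
  · rintro ⟨h0, hs⟩ i
    refine Fin.cases ?_ ?_ i
    · simpa using h0
    · intro j; simpa [Fin.tail] using hs j
  · intro hx
    exact ⟨by simpa using hx 0, fun j => by simpa [Fin.tail] using hx j.succ⟩

lemma vol_preimage (A : Set ℝ) (S : Set (Fin d → ℝ)) (hA : MeasurableSet A)
    (hS : MeasurableSet S) :
    volume (e d ⁻¹' (A ×ˢ S)) = volume A * volume S := by
  have hmp := measurePreserving_piFinSuccAbove (fun _ : Fin (d+1) => (volume : Measure ℝ)) 0
  have h1 : volume (e d ⁻¹' (A ×ˢ S)) =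
      ((volume : Measure ℝ).prod (Measure.pi fun _ : Fin d => volume)) (A ×ˢ S) := by
    rw [volume_pi]
    exact hmp.measure_preimage (hA.prod hS).nullMeasurableSet
  rw [h1, Measure.prod_prod, ← volume_pi]

lemma cons_cube (c : ℝ) (a : Fin d → ℝ) (l : ℝ) :
    Set.univ.pi (Fin.cons (Icc c (c+l)) (fun j => Icc (a j) (a j + l)) : Fin (d+1) → Set ℝ) =
    Set.univ.pi (fun i => Icc ((Fin.cons c a : Fin (d+1) → ℝ) i)
      ((Fin.cons c a : Fin (d+1) → ℝ) i + l)) := by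
  refine Set.pi_congr rfl fun i _ => ?_
  induction i using Fin.cases with
  | zero => simp
  | succ j => simp

lemma prod_diff_same (A : Set ℝ) (S T : Set (Fin d → ℝ)) :
    (A ×ˢ S) \ (A ×ˢ T) = A ×ˢ (S \ T) := by
  ext ⟨x, y⟩
  simp only [mem_diff, mem_prod]
  tauto

end JSAux

open JSAux

theorem stmt_4 (d : ℕ) (hd : 1 ≤ d) (τ s : ℝ)
    (h : IsJSPair (d + 1) τ s) : IsJSPair d τ s := by
  obtain ⟨hτ, hs, h⟩ := h
  refine ⟨hτ, hs, ?_⟩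
  rintro Q ⟨a, l, hl, rfl⟩ Ep Em hEp hEm hEpQ hEmQ hdisj hmin
  set Q : Set (Fin d → ℝ) := Set.univ.pi fun j => Icc (a j) (a j + l) with hQdef
  set I : Set ℝ := Icc 0 l with hIdef
  have hQm : MeasurableSet Q := MeasurableSet.univ_pi fun j => measurableSet_Icc
  have hIm : MeasurableSet I := measurableSet_Icc
  set c : ENNReal := ENNReal.ofReal l with hcdef
  have hc0 : c ≠ 0 := (ENNReal.ofReal_pos.mpr hl).ne'
  have hct : c ≠ ⊤ := ENNReal.ofReal_ne_top
  have hIvol : volume I = c := by simp [hIdef, Real.volume_Icc, hcdef]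
  set Ep' : Set (Fin (d+1) → ℝ) := e d ⁻¹' (I ×ˢ Ep) with hEp'def
  set Em' : Set (Fin (d+1) → ℝ) := e d ⁻¹' (I ×ˢ Em) with hEm'def
  set Q' : Set (Fin (d+1) → ℝ) := e d ⁻¹' (I ×ˢ Q) with hQ'def
  have hQ' : IsCube Q' := by
    refine ⟨Fin.cons 0 a, l, hl, ?_⟩
    rw [hQ'def, hQdef, hIdef]
    have h0 : Icc (0:ℝ) l = Icc 0 (0 + l) := by rw [zero_add]
    rw [h0, preimage_prod, cons_cube]
  have hEp'm : MeasurableSet Ep' := (e d).measurable (hIm.prod hEp)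
  have hEm'm : MeasurableSet Em' := (e d).measurable (hIm.prod hEm)
  have hEp'Q : Ep' ⊆ Q' := preimage_mono (prod_mono_right hEpQ)
  have hEm'Q : Em' ⊆ Q' := preimage_mono (prod_mono_right hEmQ)
  have hdisj' : Disjoint Ep' Em' := by
    refine Disjoint.preimage _ ?_
    rw [Set.disjoint_left]
    rintro ⟨x, y⟩ h1 h2
    exact (Set.disjoint_left.mp hdisj) h1.2 h2.2
  have hdiff : (Q' \ Ep') \ Em' = e d ⁻¹' (I ×ˢ ((Q \ Ep) \ Em)) := by
    rw [hQ'def, hEp'def, hEm'def, ← preimage_diff, ← preimage_diff,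
      prod_diff_same, prod_diff_same]
  have hvolEp' : volume Ep' = c * volume Ep := by
    rw [hEp'def, vol_preimage _ _ hIm hEp, hIvol]
  have hvolEm' : volume Em' = c * volume Em := by
    rw [hEm'def, vol_preimage _ _ hIm hEm, hIvol]
  have hvoldiff : volume ((Q' \ Ep') \ Em') = c * volume ((Q \ Ep) \ Em) := by
    rw [hdiff, vol_preimage _ _ hIm ((hQm.diff hEp).diff hEm), hIvol]
  have hmin' : min (volume Ep') (volume Em') >
      ENNReal.ofReal τ * volume ((Q' \ Ep') \ Em') := by
    rw [gt_iff_lt, lt_min_iff] at hmin ⊢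
    rw [hvolEp', hvolEm', hvoldiff]
    have hre : ENNReal.ofReal τ * (c * volume ((Q \ Ep) \ Em)) =
        c * (ENNReal.ofReal τ * volume ((Q \ Ep) \ Em)) := by ring
    rw [hre]
    exact ⟨(ENNReal.mul_lt_mul_iff_right hc0 hct).mpr hmin.1,
      (ENNReal.mul_lt_mul_iff_right hc0 hct).mpr hmin.2⟩
  obtain ⟨W, ⟨b, m, hm, rfl⟩, hWQ', hWmin⟩ :=
    h Q' hQ' Ep' Em' hEp'm hEm'm hEp'Q hEm'Q hdisj' hmin'
  set IW : Set ℝ := Icc (b 0) (b 0 + m) with hIWdef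
  set W₀ : Set (Fin d → ℝ) := Set.univ.pi fun j => Icc (b j.succ) (b j.succ + m) with hW₀def
  have hW₀m : MeasurableSet W₀ := MeasurableSet.univ_pi fun j => measurableSet_Icc
  have hIWm : MeasurableSet IW := measurableSet_Icc
  set cm : ENNReal := ENNReal.ofReal m with hcmdef
  have hcm0 : cm ≠ 0 := (ENNReal.ofReal_pos.mpr hm).ne'
  have hcmt : cm ≠ ⊤ := ENNReal.ofReal_ne_top
  have hIWvol : volume IW = cm := by simp [hIWdef, Real.volume_Icc, hcmdef]
  have hb : (Fin.cons (b 0) (fun j => b j.succ) : Fin (d+1) → ℝ) = b := by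
    funext i; exact Fin.cases rfl (fun j => rfl) i
  have hWeq : (Set.univ.pi fun i => Icc (b i) (b i + m)) = e d ⁻¹' (IW ×ˢ W₀) := by
    rw [hIWdef, hW₀def, preimage_prod, cons_cube (b 0) (fun j => b j.succ) m, hb]
  have hIWne : IW.Nonempty := ⟨b 0, by constructor <;> [rfl; linarith]⟩
  have hW₀ne : W₀.Nonempty := ⟨fun j => b j.succ, fun j _ => ⟨le_refl _, by linarith⟩⟩
  have hsub : IW ×ˢ W₀ ⊆ I ×ˢ Q := by
    rw [hWeq, hQ'def] at hWQ'
    intro p hp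
    obtain ⟨x, hx⟩ := (e d).surjective p
    rw [← hx] at hp ⊢
    exact hWQ' hp
  have hIWI : IW ⊆ I := by
    intro t ht
    obtain ⟨y, hy⟩ := hW₀ne
    exact (hsub (Set.mk_mem_prod ht hy)).1
  have hW₀Q : W₀ ⊆ Q := by
    intro y hy
    obtain ⟨t, ht⟩ := hIWne
    exact (hsub (Set.mk_mem_prod ht hy)).2
  have hinterEp : Ep' ∩ (e d ⁻¹' (IW ×ˢ W₀)) = e d ⁻¹' (IW ×ˢ (Ep ∩ W₀)) := by
    rw [hEp'def, ← preimage_inter, prod_inter_prod, Set.inter_eq_right.mpr hIWI]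
  have hinterEm : Em' ∩ (e d ⁻¹' (IW ×ˢ W₀)) = e d ⁻¹' (IW ×ˢ (Em ∩ W₀)) := by
    rw [hEm'def, ← preimage_inter, prod_inter_prod, Set.inter_eq_right.mpr hIWI]
  rw [hWeq, hinterEp, hinterEm] at hWmin
  rw [vol_preimage _ _ hIWm (hEp.inter hW₀m), vol_preimage _ _ hIWm (hEm.inter hW₀m),
    vol_preimage _ _ hIWm hW₀m, hIWvol] at hWmin
  rw [ge_iff_le, le_min_iff] at hWmin
  have hre : ENNReal.ofReal s * (cm * volume W₀) = cm * (ENNReal.ofReal s * volume W₀) := by ring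
  rw [hre] at hWmin
  refine ⟨W₀, ⟨fun j => b j.succ, m, hm, rfl⟩, hW₀Q, ?_⟩
  rw [ge_iff_le, le_min_iff]
  exact ⟨(ENNReal.mul_le_mul_iff_right hcm0 hcmt).mp hWmin.1,
    (ENNReal.mul_le_mul_iff_right hcm0 hcmt).mp hWmin.2⟩
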